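/- Let $p \geq 1$ and let $a, k, l$ be integers with $0 \leq pa \leq k < l \leq p(a+1)$. Then the matrices $(J_k \oplus J_l)^p$ and $(J_{k+1} \oplus J_{l-1})^p$ are similar. -/

import Mathlib

/-- The nilpotent Jordan block of size `k`. -/
def J (k : ℕ) : Matrix (Fin k) (Fin k) ℂ :=
  fun i j => if (i : ℕ) + 1 = (j : ℕ) then 1 else 0

/-- Two square complex matrices (over possibly different index types) are similar. -/
def MatSimilar {m n : Type} [Fintype m] [Fintype n] [DecidableEq m] [DecidableEq n]
    (A : Matrix m m ℂ) (B : Matrix n n ℂ) : Prop :=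
  ∃ e : m ≃ n, ∃ P : Matrix n n ℂ, IsUnit P ∧ B = P * (A.submatrix e.symm e.symm) * P⁻¹

lemma J_pow (m p : ℕ) (i j : Fin m) :
    ((J m) ^ p) i j = if (i : ℕ) + p = (j : ℕ) then 1 else 0 := by
  induction p generalizing j with
  | zero => simp [Matrix.one_apply, Fin.ext_iff]
  | succ p ih =>
    rw [pow_succ, Matrix.mul_apply]
    by_cases h : (i : ℕ) + p < m
    · rw [Finset.sum_eq_single (⟨(i : ℕ) + p, h⟩ : Fin m)]
      · rw [ih, if_pos rfl, one_mul]
        rfl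
      · intro b _ hb
        rw [ih]
        simp only [ite_mul, one_mul, zero_mul]
        rw [if_neg]
        intro hc
        exact hb (Fin.ext hc.symm)
      · simp
    · rw [Finset.sum_eq_zero, if_neg (by omega)]
      intro b _
      rw [ih, if_neg (by omega), zero_mul]

lemma fb_pow {m n : ℕ} (X : Matrix (Fin m) (Fin m) ℂ) (Y : Matrix (Fin n) (Fin n) ℂ)
    (p : ℕ) :
    (Matrix.fromBlocks X 0 0 Y) ^ p = Matrix.fromBlocks (X ^ p) 0 0 (Y ^ p) := by
  induction p with
  | zero => simp [Matrix.fromBlocks_one]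
  | succ p ih => rw [pow_succ, pow_succ, pow_succ, ih, Matrix.fromBlocks_multiply]; simp

lemma entry (m n p : ℕ) (u v : Fin m ⊕ Fin n) :
    ((Matrix.fromBlocks (J m) 0 0 (J n)) ^ p) u v =
      match u, v with
      | .inl i, .inl j => if (i : ℕ) + p = (j : ℕ) then 1 else 0
      | .inr i, .inr j => if (i : ℕ) + p = (j : ℕ) then 1 else 0
      | _, _ => 0 := by
  rw [fb_pow]
  cases u <;> cases v <;>
    simp [Matrix.fromBlocks_apply₁₁, Matrix.fromBlocks_apply₁₂,
      Matrix.fromBlocks_apply₂₁, Matrix.fromBlocks_apply₂₂, J_pow]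

lemma shift_mod (p c d x : ℕ) (hd : d < p) (hx : x % p = c) : (x + d - c) % p = d := by
  have h1 : c ≤ x := hx ▸ Nat.mod_le x p
  obtain ⟨q, hq⟩ : ∃ q, x = p * q + c := ⟨x / p, by conv_lhs => rw [← Nat.div_add_mod x p, hx]⟩
  subst hq
  rw [show p * q + c + d - c = p * q + d by omega, Nat.mul_add_mod, Nat.mod_eq_of_lt hd]

lemma mod_ne {p x y : ℕ} (h : x % p ≠ y % p) : x + p ≠ y := fun hc =>
  h (by rw [← hc, Nat.add_mod_right])

lemma exists_equiv (p a s t : ℕ) (hp : 1 ≤ p) (hs : s < p) (hst : s < t) (htp : t ≤ p) :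
    ∃ e : (Fin (p*a+s) ⊕ Fin (p*a+t)) ≃ (Fin (p*a+s+1) ⊕ Fin (p*a+t-1)),
      ∀ u v, ((Matrix.fromBlocks (J (p*a+s)) 0 0 (J (p*a+t))) ^ p) u v
        = ((Matrix.fromBlocks (J (p*a+s+1)) 0 0 (J (p*a+t-1))) ^ p) (e u) (e v) := by
  set f : (Fin (p*a+s) ⊕ Fin (p*a+t)) → (Fin (p*a+s+1) ⊕ Fin (p*a+t-1)) :=
    fun x => match x with
    | .inl i => if h : (i : ℕ) % p = s then
        .inr ⟨(i : ℕ) + (t-1) - s, by have := i.isLt; omega⟩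
      else .inl ⟨(i : ℕ), by have := i.isLt; omega⟩
    | .inr j => if h : (j : ℕ) % p = t-1 then
        .inl ⟨(j : ℕ) + s - (t-1), by have := j.isLt; omega⟩
      else .inr ⟨(j : ℕ), by
        have hj := j.isLt
        rcases Nat.lt_or_ge (j : ℕ) (p*a+t-1) with h' | h'
        · exact h'
        · exfalso; apply h
          have hje : (j : ℕ) = (t-1) + p * a := by omega
          rw [hje, Nat.add_mul_mod_self_left, Nat.mod_eq_of_lt (by omega)]⟩
    with hf
  have hinj : Function.Injective f := by
    intro x y hxy
    rcases x with i | i <;> rcases y with j | j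
    · by_cases h1 : (i:ℕ) % p = s <;> by_cases h2 : (j:ℕ) % p = s <;>
        simp only [hf] at hxy <;> simp [h1, h2] at hxy
      · refine congrArg Sum.inl (Fin.ext ?_)
        have hi : s ≤ (i:ℕ) := le_trans (le_of_eq h1.symm) (Nat.mod_le _ _)
        have hj : s ≤ (j:ℕ) := le_trans (le_of_eq h2.symm) (Nat.mod_le _ _)
        omega
      · exact congrArg Sum.inl (Fin.ext hxy)
    · by_cases h1 : (i:ℕ) % p = s <;> by_cases h2 : (j:ℕ) % p = t-1 <;>
        simp only [hf] at hxy <;> simp [h1, h2] at hxy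
      · exact absurd (by rw [← hxy]; exact shift_mod p s (t-1) i (by omega) h1) h2
      · exact absurd (by rw [hxy]; exact shift_mod p (t-1) s j hs h2) h1
    · by_cases h1 : (i:ℕ) % p = t-1 <;> by_cases h2 : (j:ℕ) % p = s <;>
        simp only [hf] at hxy <;> simp [h1, h2] at hxy
      · exact absurd (by rw [← hxy]; exact shift_mod p (t-1) s i hs h1) h2
      · exact absurd (by rw [hxy]; exact shift_mod p s (t-1) j (by omega) h2) h1
    · by_cases h1 : (i:ℕ) % p = t-1 <;> by_cases h2 : (j:ℕ) % p = t-1 <;>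
        simp only [hf] at hxy <;> simp [h1, h2] at hxy
      · refine congrArg Sum.inr (Fin.ext ?_)
        have hi : t-1 ≤ (i:ℕ) := le_trans (le_of_eq h1.symm) (Nat.mod_le _ _)
        have hj : t-1 ≤ (j:ℕ) := le_trans (le_of_eq h2.symm) (Nat.mod_le _ _)
        omega
      · exact congrArg Sum.inr (Fin.ext hxy)
  have hbij : Function.Bijective f :=
    (Fintype.bijective_iff_injective_and_card f).2 ⟨hinj, by simp; omega⟩
  refine ⟨Equiv.ofBijective f hbij, fun u v => ?_⟩
  rw [entry, entry, show ⇑(Equiv.ofBijective f hbij) = f from rfl]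
  rcases u with i | i <;> rcases v with j | j
  · by_cases h1 : (i:ℕ) % p = s <;> by_cases h2 : (j:ℕ) % p = s <;>
      simp only [hf, h1, h2] <;> simp [h1, h2]
    · have hi : s ≤ (i:ℕ) := le_trans (le_of_eq h1.symm) (Nat.mod_le _ _)
      have hj : s ≤ (j:ℕ) := le_trans (le_of_eq h2.symm) (Nat.mod_le _ _)
      congr 1
      simp only [eq_iff_iff]
      omega
    · exact mod_ne fun hc => h2 (hc.symm.trans h1)
    · exact mod_ne fun hc => h1 (hc.trans h2)
  · by_cases h1 : (i:ℕ) % p = s <;> by_cases h2 : (j:ℕ) % p = t-1 <;>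
      simp only [hf, h1, h2] <;> simp [h1, h2]
    · exact (mod_ne fun hc => h2 (hc.symm.trans (shift_mod p s (t-1) i (by omega) h1)))
    · exact (mod_ne fun hc => h1 (hc.trans (shift_mod p (t-1) s j hs h2)))
  · by_cases h1 : (i:ℕ) % p = t-1 <;> by_cases h2 : (j:ℕ) % p = s <;>
      simp only [hf, h1, h2] <;> simp [h1, h2]
    · exact (mod_ne fun hc => h2 (hc.symm.trans (shift_mod p (t-1) s i hs h1)))
    · exact (mod_ne fun hc => h1 (hc.trans (shift_mod p s (t-1) j (by omega) h2)))
  · by_cases h1 : (i:ℕ) % p = t-1 <;> by_cases h2 : (j:ℕ) % p = t-1 <;>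
      simp only [hf, h1, h2] <;> simp [h1, h2]
    · have hi : t-1 ≤ (i:ℕ) := le_trans (le_of_eq h1.symm) (Nat.mod_le _ _)
      have hj : t-1 ≤ (j:ℕ) := le_trans (le_of_eq h2.symm) (Nat.mod_le _ _)
      congr 1
      simp only [eq_iff_iff]
      omega
    · exact mod_ne fun hc => h2 (hc.symm.trans h1)
    · exact mod_ne fun hc => h1 (hc.trans h2)

theorem key (p a s t : ℕ) (hp : 1 ≤ p) (hs : s < p) (hst : s < t) (htp : t ≤ p) :
    MatSimilar ((Matrix.fromBlocks (J (p*a+s)) 0 0 (J (p*a+t))) ^ p)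
      ((Matrix.fromBlocks (J (p*a+s+1)) 0 0 (J (p*a+t-1))) ^ p) := by
  obtain ⟨e, he⟩ := exists_equiv p a s t hp hs hst htp
  refine ⟨e, 1, isUnit_one, ?_⟩
  rw [inv_one, one_mul, mul_one]
  ext x y
  rw [Matrix.submatrix_apply]
  have h := he (e.symm x) (e.symm y)
  simp only [Equiv.apply_symm_apply] at h
  exact h.symm

/-- If `0 ≤ p*a ≤ k < l ≤ p*(a+1)` then `(J k ⊕ J l)^p` and `(J (k+1) ⊕ J (l-1))^p`
are similar. -/
theorem stmt1 (p a k l : ℕ) (hp : 1 ≤ p) (h1 : p * a ≤ k) (h2 : k < l)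
    (h3 : l ≤ p * (a + 1)) :
    MatSimilar ((Matrix.fromBlocks (J k) 0 0 (J l)) ^ p)
      ((Matrix.fromBlocks (J (k + 1)) 0 0 (J (l - 1))) ^ p) := by
  have hpa : p * (a + 1) = p * a + p := by ring
  obtain ⟨s, rfl⟩ : ∃ s, k = p * a + s := ⟨k - p * a, by omega⟩
  obtain ⟨t, rfl⟩ : ∃ t, l = p * a + t := ⟨l - p * a, by omega⟩
  exact key p a s t hp (by omega) (by omega) (by omega)
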